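/- For the warped product function φ(x) = (cos(n x/2))^{2/n} on (-π/n, π/n) with n ≥ 2, one has -2(n-1)·φ''/φ - (n-1)(n-2)·(φ')²/φ² = n(n-1) at every point of the interval. -/

import Mathlib

open Real

/-- Positivity of cos on the interval. -/
lemma aux_cos_pos_14 (c t : ℝ) (hc0 : 0 < c) (ht : t ∈ Set.Ioo (-(π / c)) (π / c)) :
    0 < Real.cos (c * t / 2) := by
  apply Real.cos_pos_of_mem_Ioo
  obtain ⟨h1, h2⟩ := ht
  constructor
  · have : -π < t * c := by
      have := (div_lt_iff₀ hc0).mp (by rw [neg_div] at *; linarith : (-π) / c < t)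
      linarith
    nlinarith
  · have : t * c < π := (lt_div_iff₀ hc0).mp h2
    nlinarith

/-- First derivative. -/
lemma aux_d1_14 (c : ℝ) (hc0 : 0 < c) (t : ℝ) (hcos : 0 < Real.cos (c * t / 2)) :
    HasDerivAt (fun t : ℝ => Real.cos (c * t / 2) ^ ((2 : ℝ) / c))
      (-(Real.cos (c * t / 2) ^ ((2 : ℝ) / c - 1) * Real.sin (c * t / 2))) t := by
  have hu : HasDerivAt (fun t : ℝ => c * t / 2) (c / 2) t := by
    simpa using ((hasDerivAt_id t).const_mul c).div_const 2
  have hcosd : HasDerivAt (fun t : ℝ => Real.cos (c * t / 2))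
      (-Real.sin (c * t / 2) * (c / 2)) t := (Real.hasDerivAt_cos _).comp t hu
  have := hcosd.rpow_const (p := (2 : ℝ) / c) (Or.inl hcos.ne')
  convert this using 1
  field_simp

/-- Second derivative (derivative of the explicit first-derivative formula). -/
lemma aux_d2_14 (c : ℝ) (hc0 : 0 < c) (t : ℝ) (hcos : 0 < Real.cos (c * t / 2)) :
    HasDerivAt (fun t : ℝ => -(Real.cos (c * t / 2) ^ ((2 : ℝ) / c - 1) * Real.sin (c * t / 2)))
      (-(((2 / c - 1) * Real.cos (c * t / 2) ^ ((2 : ℝ) / c - 2) * (-Real.sin (c * t / 2) * (c / 2)))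
            * Real.sin (c * t / 2)
          + Real.cos (c * t / 2) ^ ((2 : ℝ) / c - 1) * (Real.cos (c * t / 2) * (c / 2)))) t := by
  have hu : HasDerivAt (fun t : ℝ => c * t / 2) (c / 2) t := by
    simpa using ((hasDerivAt_id t).const_mul c).div_const 2
  have hcosd : HasDerivAt (fun t : ℝ => Real.cos (c * t / 2))
      (-Real.sin (c * t / 2) * (c / 2)) t := (Real.hasDerivAt_cos _).comp t hu
  have hsind : HasDerivAt (fun t : ℝ => Real.sin (c * t / 2))
      (Real.cos (c * t / 2) * (c / 2)) t := (Real.hasDerivAt_sin _).comp t hu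
  have hrp := hcosd.rpow_const (p := (2 : ℝ) / c - 1) (Or.inl hcos.ne')
  have hrp' : HasDerivAt (fun t : ℝ => Real.cos (c * t / 2) ^ ((2 : ℝ) / c - 1))
      ((2 / c - 1) * Real.cos (c * t / 2) ^ ((2 : ℝ) / c - 2) * (-Real.sin (c * t / 2) * (c / 2))) t := by
    convert hrp using 1
    rw [show (2:ℝ)/c - 2 = (2:ℝ)/c - 1 - 1 by ring]
    ring
  exact (hrp'.mul hsind).neg

theorem stmt_14 (n : ℕ) (hn : 2 ≤ n) :
    ∀ x ∈ Set.Ioo (-(π / n)) (π / n),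
      -2 * ((n : ℝ) - 1) *
          (deriv (deriv (fun t : ℝ => Real.cos ((n : ℝ) * t / 2) ^ ((2 : ℝ) / n))) x) /
          (Real.cos ((n : ℝ) * x / 2) ^ ((2 : ℝ) / n))
        - ((n : ℝ) - 1) * ((n : ℝ) - 2) *
          (deriv (fun t : ℝ => Real.cos ((n : ℝ) * t / 2) ^ ((2 : ℝ) / n)) x) ^ 2 /
          (Real.cos ((n : ℝ) * x / 2) ^ ((2 : ℝ) / n)) ^ 2
        = (n : ℝ) * ((n : ℝ) - 1) := by
  intro x hx
  set c : ℝ := (n : ℝ) with hcdef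
  have hc2 : (2:ℝ) ≤ c := by rw [hcdef]; exact_mod_cast hn
  have hc0 : (0:ℝ) < c := by linarith
  have hcos : 0 < Real.cos (c * x / 2) := aux_cos_pos_14 c x hc0 hx
  -- first derivative value
  have hd1 : deriv (fun t : ℝ => Real.cos (c * t / 2) ^ ((2 : ℝ) / c)) x
      = -(Real.cos (c * x / 2) ^ ((2 : ℝ) / c - 1) * Real.sin (c * x / 2)) :=
    (aux_d1_14 c hc0 x hcos).deriv
  -- deriv of deriv
  have hev : deriv (fun t : ℝ => Real.cos (c * t / 2) ^ ((2 : ℝ) / c))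
      =ᶠ[nhds x] (fun t : ℝ => -(Real.cos (c * t / 2) ^ ((2 : ℝ) / c - 1) * Real.sin (c * t / 2))) := by
    filter_upwards [isOpen_Ioo.mem_nhds hx] with t ht
    exact (aux_d1_14 c hc0 t (aux_cos_pos_14 c t hc0 ht)).deriv
  have hd2 : deriv (deriv (fun t : ℝ => Real.cos (c * t / 2) ^ ((2 : ℝ) / c))) x
      = -(((2 / c - 1) * Real.cos (c * x / 2) ^ ((2 : ℝ) / c - 2) * (-Real.sin (c * x / 2) * (c / 2)))
            * Real.sin (c * x / 2)
          + Real.cos (c * x / 2) ^ ((2 : ℝ) / c - 1) * (Real.cos (c * x / 2) * (c / 2))) := by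
    rw [hev.deriv_eq]
    exact (aux_d2_14 c hc0 x hcos).deriv
  rw [hd2, hd1]
  set K := Real.cos (c * x / 2) with hK
  set S := Real.sin (c * x / 2) with hS
  set A := K ^ ((2 : ℝ) / c) with hA
  have hApos : 0 < A := Real.rpow_pos_of_pos hcos _
  have e1 : K ^ ((2 : ℝ) / c - 1) = A / K := by
    rw [hA, Real.rpow_sub hcos, Real.rpow_one]
  have e2 : K ^ ((2 : ℝ) / c - 2) = A / (K * K) := by
    rw [show (2:ℝ)/c - 2 = (2:ℝ)/c - 1 - 1 by ring, Real.rpow_sub hcos, Real.rpow_one, e1]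
    ring
  have hsc : S ^ 2 = 1 - K ^ 2 := by
    rw [hS, hK]; nlinarith [Real.sin_sq_add_cos_sq (c * x / 2)]
  rw [e1, e2]
  field_simp
  nlinarith [hsc, sq_nonneg K, sq_nonneg S, hcos, hApos, hc0, sq_nonneg (A*K), sq_nonneg A]
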